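/- Let v = c + e with c ∈ M^l and e = x_{I_1} + ... + x_{I_k}, k ≤ t, where the I_τ ⊆ {1,...,m} are pairwise distinct and at least one satisfies |I_τ| ≥ l. Then the remainder of v on division by G has Hamming weight strictly greater than t. -/

import Mathlib

set_option synthInstance.maxHeartbeats 1000000
set_option maxHeartbeats 1000000

open MvPolynomial

noncomputable def gI (m : ℕ) (I : Finset (Fin m)) : MvPolynomial (Fin m) (ZMod 2) :=
  ∏ i ∈ I, (X i - 1)

noncomputable def XI (m : ℕ) (I : Finset (Fin m)) : MvPolynomial (Fin m) (ZMod 2) :=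
  ∏ i ∈ I, X i

/-- The ideal (X₁²-1, …, Xₘ²-1). -/
noncomputable def relIdeal (m : ℕ) : Ideal (MvPolynomial (Fin m) (ZMod 2)) :=
  Ideal.span {p | ∃ i : Fin m, p = X i ^ 2 - 1}

/-- The ambient algebra A = F₂[X₁,…,Xₘ]/(X₁²-1,…,Xₘ²-1). -/
abbrev Amb (m : ℕ) := MvPolynomial (Fin m) (ZMod 2) ⧸ relIdeal m

/-- The ideal M of A generated by the images of the Xᵢ - 1. -/
noncomputable def Mideal (m : ℕ) : Ideal (Amb m) :=
  Ideal.span {a | ∃ i : Fin m, a = Ideal.Quotient.mk (relIdeal m) (X i - 1)}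

/-- G = {∏_{i∈I}(Xᵢ-1) : |I| = l}. -/
def Gset (m l : ℕ) : Set (MvPolynomial (Fin m) (ZMod 2)) :=
  {p | ∃ I : Finset (Fin m), I.card = l ∧ p = gI m I}

/-- `IsRemainder m l f r` : r is the remainder of f on division by the Groebner basis
G = {∏_{i∈I}(Xᵢ-1) : |I| = l} (grlex order): f - r ∈ ⟨G⟩ and no term of r is divisible
by any of the leading terms X_I (|I| = l) of the members of G. -/
def IsRemainder (m l : ℕ) (f r : MvPolynomial (Fin m) (ZMod 2)) : Prop :=
  f - r ∈ Ideal.span (Gset m l) ∧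
  ∀ α ∈ r.support, ∀ I : Finset (Fin m), I.card = l → ¬ I ⊆ α.support

section RMcomb
variable {ι : Type*} [DecidableEq ι]

noncomputable def Dtr (U : Finset ι) (G : Finset ι → ZMod 2) (S : Finset ι) : ZMod 2 :=
  ∑ J ∈ U.powerset.filter (fun J => S ⊆ J), G J

lemma Zlem (U : Finset ι) (G : Finset ι → ZMod 2) (hne : ∃ J ∈ U.powerset, G J ≠ 0) :
    ∃ S ∈ U.powerset, Dtr U G S ≠ 0 := by
  obtain ⟨J, hJ, hG⟩ := hne
  have hnonempty : (U.powerset.filter (fun J => G J ≠ 0)).Nonempty :=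
    ⟨J, Finset.mem_filter.2 ⟨hJ, hG⟩⟩
  obtain ⟨J₀, hJ₀, hmax⟩ := Finset.exists_max_image _ (fun J => J.card) hnonempty
  have hJ₀U : J₀ ∈ U.powerset := (Finset.mem_filter.1 hJ₀).1
  have hGJ₀ : G J₀ ≠ 0 := (Finset.mem_filter.1 hJ₀).2
  refine ⟨J₀, hJ₀U, ?_⟩
  have : Dtr U G J₀ = G J₀ := by
    refine Finset.sum_eq_single J₀ ?_ ?_
    · intro K hK hKne
      by_contra hGK
      have hKmem : K ∈ U.powerset.filter (fun J => G J ≠ 0) :=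
        Finset.mem_filter.2 ⟨(Finset.mem_filter.1 hK).1, hGK⟩
      have hsub : J₀ ⊆ K := (Finset.mem_filter.1 hK).2
      exact hKne (Finset.eq_of_subset_of_card_le hsub (hmax K hKmem)).symm
    · intro h
      exact absurd (Finset.mem_filter.2 ⟨hJ₀U, Finset.Subset.refl J₀⟩) h
  rw [this]; exact hGJ₀

lemma RMlem (U : Finset ι) : ∀ (l : ℕ) (G : Finset ι → ZMod 2),
    (∀ J ∈ U.powerset, J.card < l → G J = 0) →
    (∃ J ∈ U.powerset, G J ≠ 0) →
    2 ^ l ≤ ((U.powerset).filter (fun S => Dtr U G S ≠ 0)).card := by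
  induction U using Finset.induction_on with
  | empty =>
    intro l G hvan hne
    obtain ⟨J, hJ, hG⟩ := hne
    rw [Finset.powerset_empty, Finset.mem_singleton] at hJ
    subst hJ
    have hl : l = 0 := by
      by_contra h
      exact hG (hvan ∅ (by simp) (by simp only [Finset.card_empty]; omega))
    subst hl
    have hD : Dtr (∅ : Finset ι) G ∅ = G ∅ := by
      simp [Dtr]
    have hmem : (∅ : Finset ι) ∈ (Finset.powerset (∅ : Finset ι)).filter
        (fun S => Dtr ∅ G S ≠ 0) := by
      refine Finset.mem_filter.2 ⟨by simp, ?_⟩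
      rw [hD]; exact hG
    calc 2 ^ 0 = 1 := by norm_num
    _ ≤ _ := Finset.card_pos.2 ⟨∅, hmem⟩
  | @insert a U ha IH =>
    intro l G hvan hne
    set G1 : Finset ι → ZMod 2 := fun J => G (insert a J) with hG1def
    set Gs : Finset ι → ZMod 2 := fun J => G J + G1 J with hGsdef
    have hinj : ∀ J1 ∈ U.powerset, ∀ J2 ∈ U.powerset, insert a J1 = insert a J2 → J1 = J2 := by
      intro J1 h1 J2 h2 h
      have ha1 : a ∉ J1 := fun hx => ha ((Finset.mem_powerset.1 h1) hx)
      have ha2 : a ∉ J2 := fun hx => ha ((Finset.mem_powerset.1 h2) hx)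
      have := congrArg (fun s => Finset.erase s a) h
      simpa [Finset.erase_insert ha1, Finset.erase_insert ha2] using this
    -- (A)
    have hA : ∀ S ∈ U.powerset, Dtr (insert a U) G S = Dtr U Gs S := by
      intro S hS
      have haS : a ∉ S := fun hx => ha ((Finset.mem_powerset.1 hS) hx)
      have hdisj : Disjoint (U.powerset.filter (fun J => S ⊆ J))
          ((U.powerset.image (insert a)).filter (fun J => S ⊆ J)) := by
        rw [Finset.disjoint_left]
        intro J hJ1 hJ2
        have h1 : J ∈ U.powerset := (Finset.mem_filter.1 hJ1).1
        have haJ : a ∉ J := fun hx => ha ((Finset.mem_powerset.1 h1) hx)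
        obtain ⟨K, _, hK⟩ := Finset.mem_image.1 (Finset.mem_filter.1 hJ2).1
        exact haJ (hK ▸ Finset.mem_insert_self a K)
      rw [show Dtr (insert a U) G S
          = ∑ J ∈ (insert a U).powerset.filter (fun J => S ⊆ J), G J from rfl,
        Finset.powerset_insert, Finset.filter_union, Finset.sum_union hdisj]
      have h2 : ((U.powerset.image (insert a)).filter (fun J => S ⊆ J))
          = (U.powerset.filter (fun J => S ⊆ J)).image (insert a) := by
        rw [Finset.filter_image]
        congr 1
        apply Finset.filter_congr
        intro J hJ
        exact Finset.subset_insert_iff_of_notMem haS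
      rw [h2, Finset.sum_image (fun x hx y hy h =>
        hinj x (Finset.mem_filter.1 hx).1 y (Finset.mem_filter.1 hy).1 h)]
      rw [show Dtr U Gs S = ∑ J ∈ U.powerset.filter (fun J => S ⊆ J), Gs J from rfl,
        hGsdef, Finset.sum_add_distrib]
    -- (B)
    have hB : ∀ S ∈ U.powerset, Dtr (insert a U) G (insert a S) = Dtr U G1 S := by
      intro S hS
      have haS : a ∉ S := fun hx => ha ((Finset.mem_powerset.1 hS) hx)
      have hempty : (U.powerset.filter (fun J => insert a S ⊆ J)) = ∅ := by
        apply Finset.filter_false_of_mem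
        intro J hJ hsub
        have haJ : a ∉ J := fun hx => ha ((Finset.mem_powerset.1 hJ) hx)
        exact haJ (hsub (Finset.mem_insert_self a S))
      have h2 : ((U.powerset.image (insert a)).filter (fun J => insert a S ⊆ J))
          = (U.powerset.filter (fun J => S ⊆ J)).image (insert a) := by
        rw [Finset.filter_image]
        congr 1
        apply Finset.filter_congr
        intro J hJ
        constructor
        · intro h x hx
          have hx' := h (Finset.mem_insert_of_mem hx)
          rcases Finset.mem_insert.1 hx' with h' | h'
          · exact absurd (h' ▸ hx) haS
          · exact h'
        · intro h
          exact Finset.insert_subset_insert a h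
      have hdisj : Disjoint (U.powerset.filter (fun J => insert a S ⊆ J))
          ((U.powerset.image (insert a)).filter (fun J => insert a S ⊆ J)) := by
        rw [hempty]; exact Finset.disjoint_empty_left _
      rw [show Dtr (insert a U) G (insert a S)
          = ∑ J ∈ (insert a U).powerset.filter (fun J => insert a S ⊆ J), G J from rfl,
        Finset.powerset_insert, Finset.filter_union, Finset.sum_union hdisj, hempty, h2,
        Finset.sum_image (fun x hx y hy h =>
          hinj x (Finset.mem_filter.1 hx).1 y (Finset.mem_filter.1 hy).1 h)]
      simp only [Finset.sum_empty, zero_add]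
      rfl
    -- (C)
    have hC : ((insert a U).powerset.filter (fun S => Dtr (insert a U) G S ≠ 0)).card
        = (U.powerset.filter (fun S => Dtr U Gs S ≠ 0)).card
          + (U.powerset.filter (fun S => Dtr U G1 S ≠ 0)).card := by
      have hdisj : Disjoint (U.powerset.filter (fun S => Dtr (insert a U) G S ≠ 0))
          ((U.powerset.image (insert a)).filter (fun S => Dtr (insert a U) G S ≠ 0)) := by
        rw [Finset.disjoint_left]
        intro S hS1 hS2
        have h1 : S ∈ U.powerset := (Finset.mem_filter.1 hS1).1
        have haS : a ∉ S := fun hx => ha ((Finset.mem_powerset.1 h1) hx)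
        obtain ⟨K, _, hK⟩ := Finset.mem_image.1 (Finset.mem_filter.1 hS2).1
        exact haS (hK ▸ Finset.mem_insert_self a K)
      rw [Finset.powerset_insert, Finset.filter_union, Finset.card_union_of_disjoint hdisj]
      congr 1
      · apply congrArg
        apply Finset.filter_congr
        intro S hS
        rw [hA S hS]
      · rw [Finset.filter_image]
        have heq : (U.powerset.filter (fun S => Dtr (insert a U) G (insert a S) ≠ 0))
            = U.powerset.filter (fun S => Dtr U G1 S ≠ 0) := by
          apply Finset.filter_congr
          intro S hS
          rw [hB S hS]
        rw [heq]
        apply Finset.card_image_of_injOn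
        intro x hx y hy h
        exact hinj x (Finset.mem_filter.1 hx).1 y (Finset.mem_filter.1 hy).1 h
    -- case analysis
    rcases l with _ | l'
    · obtain ⟨S, hSmem, hSne⟩ := Zlem (insert a U) G hne
      calc (2:ℕ) ^ 0 = 1 := by norm_num
      _ ≤ _ := Finset.card_pos.2 ⟨S, Finset.mem_filter.2 ⟨hSmem, hSne⟩⟩
    · rw [hC]
      by_cases h1 : ∃ J ∈ U.powerset, G1 J ≠ 0
      · have hvan1 : ∀ J ∈ U.powerset, J.card < l' → G1 J = 0 := by
          intro J hJ hcard
          apply hvan (insert a J)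
          · rw [Finset.mem_powerset] at hJ ⊢
            exact Finset.insert_subset_insert a hJ
          · calc (insert a J).card ≤ J.card + 1 := Finset.card_insert_le a J
            _ < l' + 1 := by omega
        have hN2 : 2 ^ l' ≤ (U.powerset.filter (fun S => Dtr U G1 S ≠ 0)).card :=
          IH l' G1 hvan1 h1
        by_cases hs : ∃ J ∈ U.powerset, Gs J ≠ 0
        · have hvans : ∀ J ∈ U.powerset, J.card < l' → Gs J = 0 := by
            intro J hJ hcard
            have hGJ : G J = 0 := by
              apply hvan J
              · rw [Finset.mem_powerset] at hJ ⊢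
                exact hJ.trans (Finset.subset_insert a U)
              · omega
            have hG1J : G1 J = 0 := hvan1 J hJ hcard
            simp [hGsdef, hGJ, hG1J]
          have hN1 : 2 ^ l' ≤ (U.powerset.filter (fun S => Dtr U Gs S ≠ 0)).card :=
            IH l' Gs hvans hs
          calc 2 ^ (l' + 1) = 2 ^ l' + 2 ^ l' := by ring
          _ ≤ _ := Nat.add_le_add hN1 hN2
        · push_neg at hs
          have hvan1' : ∀ J ∈ U.powerset, J.card < l' + 1 → G1 J = 0 := by
            intro J hJ hcard
            have hGJ : G J = 0 := by
              apply hvan J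
              · rw [Finset.mem_powerset] at hJ ⊢
                exact hJ.trans (Finset.subset_insert a U)
              · omega
            have := hs J hJ
            rw [hGsdef] at this
            simp only [hGJ, zero_add] at this
            exact this
          have hN2' : 2 ^ (l' + 1) ≤ (U.powerset.filter (fun S => Dtr U G1 S ≠ 0)).card :=
            IH (l' + 1) G1 hvan1' h1
          omega
      · push_neg at h1
        have hnes : ∃ J ∈ U.powerset, Gs J ≠ 0 := by
          obtain ⟨J, hJ, hGJ⟩ := hne
          by_cases haJ : a ∈ J
          · exfalso
            have hJe : J.erase a ∈ U.powerset := by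
              rw [Finset.mem_powerset]
              intro x hx
              have hx1 := Finset.mem_of_mem_erase hx
              have hx2 := Finset.ne_of_mem_erase hx
              have := (Finset.mem_powerset.1 hJ) hx1
              rcases Finset.mem_insert.1 this with h' | h'
              · exact absurd h' hx2
              · exact h'
            have : G1 (J.erase a) = G J := by
              rw [hG1def]
              simp only []
              rw [Finset.insert_erase haJ]
            exact hGJ (this ▸ h1 (J.erase a) hJe)
          · have hJU : J ∈ U.powerset := by
              rw [Finset.mem_powerset]
              intro x hx
              rcases Finset.mem_insert.1 ((Finset.mem_powerset.1 hJ) hx) with h' | h'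
              · exact absurd (h' ▸ hx) haJ
              · exact h'
            refine ⟨J, hJU, ?_⟩
            rw [hGsdef]
            simp only [h1 J hJU, add_zero]
            exact hGJ
        have hvans : ∀ J ∈ U.powerset, J.card < l' + 1 → Gs J = 0 := by
          intro J hJ hcard
          have hGJ : G J = 0 := by
            apply hvan J
            · rw [Finset.mem_powerset] at hJ ⊢
              exact hJ.trans (Finset.subset_insert a U)
            · omega
          simp [hGsdef, hGJ, h1 J hJ]
        have hN1 : 2 ^ (l' + 1) ≤ (U.powerset.filter (fun S => Dtr U Gs S ≠ 0)).card :=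
          IH (l' + 1) Gs hvans hnes
        omega
section PolyPart

open Finset in
noncomputable def sfm {m : ℕ} (J : Finset (Fin m)) : Fin m →₀ ℕ := ∑ i ∈ J, Finsupp.single i 1

def Oodd {m : ℕ} (α : Fin m →₀ ℕ) : Finset (Fin m) := α.support.filter (fun i => α i % 2 = 1)

def degn {m : ℕ} (α : Fin m →₀ ℕ) : ℕ := ∑ i, α i

variable {m : ℕ}

lemma sfm_apply (J : Finset (Fin m)) (i : Fin m) : sfm J i = if i ∈ J then 1 else 0 := by
  rw [sfm, Finset.sum_apply']
  simp [Finsupp.single_apply, Finset.sum_ite_eq]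

lemma sfm_support (J : Finset (Fin m)) : (sfm J).support = J := by
  ext i
  simp [Finsupp.mem_support_iff, sfm_apply]

lemma sfm_le_one (J : Finset (Fin m)) (i : Fin m) : sfm J i ≤ 1 := by
  rw [sfm_apply]; split <;> omega

lemma sfm_inj : Function.Injective (sfm (m := m)) := by
  intro J K h
  rw [← sfm_support J, ← sfm_support K, h]

lemma degn_sfm (J : Finset (Fin m)) : degn (sfm J) = J.card := by
  rw [degn]
  simp only [sfm_apply]
  rw [Finset.sum_ite_mem, Finset.univ_inter, Finset.sum_const, smul_eq_mul, mul_one]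

lemma degn_add (α β : Fin m →₀ ℕ) : degn (α + β) = degn α + degn β := by
  simp [degn, Finsupp.add_apply, Finset.sum_add_distrib]

lemma O_sfm (J : Finset (Fin m)) : Oodd (sfm J) = J := by
  rw [Oodd, sfm_support]
  apply Finset.filter_true_of_mem
  intro i hi
  rw [sfm_apply, if_pos hi]

lemma O_subset (α : Fin m →₀ ℕ) : Oodd α ⊆ α.support := Finset.filter_subset _ _

/-- the ideal generated by the Xᵢ. -/
noncomputable def Msp (m : ℕ) : Ideal (MvPolynomial (Fin m) (ZMod 2)) :=
  Ideal.span {q | ∃ i : Fin m, q = X i}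

/-- the ideal generated by the Xᵢ². -/
noncomputable def Sqsp (m : ℕ) : Ideal (MvPolynomial (Fin m) (ZMod 2)) :=
  Ideal.span {q | ∃ i : Fin m, q = X i ^ 2}

lemma mem_Msp_deg : ∀ p ∈ Msp m, ∀ α ∈ p.support, 1 ≤ degn α := by
  intro p hp
  induction hp using Submodule.span_induction with
  | mem x hx =>
    obtain ⟨i, rfl⟩ := hx
    intro α hα
    rw [support_X] at hα
    rw [Finset.mem_singleton] at hα
    subst hα
    have hs : (Finsupp.single i 1 : Fin m →₀ ℕ) = sfm ({i} : Finset (Fin m)) := by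
      rw [sfm, Finset.sum_singleton]
    rw [hs, degn_sfm, Finset.card_singleton]
  | zero => intro α hα; simp at hα
  | add x y hx hy ihx ihy =>
    intro α hα
    rcases Finset.mem_union.1 (MvPolynomial.support_add hα) with h | h
    · exact ihx α h
    · exact ihy α h
  | smul a x hx ihx =>
    intro α hα
    rw [smul_eq_mul] at hα
    obtain ⟨β, hβ, γ, hγ, rfl⟩ := Finset.mem_add.1 (MvPolynomial.support_mul _ _ hα)
    have := ihx γ hγ
    rw [degn_add]
    omega

lemma mem_Msp_pow_deg : ∀ (l : ℕ), ∀ p ∈ (Msp m) ^ l, ∀ α ∈ p.support, l ≤ degn α := by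
  intro l
  induction l with
  | zero => intro p _ α _; omega
  | succ n ih =>
    intro p hp
    rw [pow_succ] at hp
    refine Submodule.mul_induction_on hp ?_ ?_
    · intro a ha b hb α hα
      obtain ⟨β, hβ, γ, hγ, rfl⟩ := Finset.mem_add.1 (MvPolynomial.support_mul _ _ hα)
      have h1 := ih a ha β hβ
      have h2 := mem_Msp_deg b hb γ hγ
      rw [degn_add]
      omega
    · intro x y ihx ihy α hα
      rcases Finset.mem_union.1 (MvPolynomial.support_add hα) with h | h
      · exact ihx α h
      · exact ihy α h

lemma mem_Sqsp_even : ∀ p ∈ Sqsp m, ∀ α ∈ p.support, ∃ i, 2 ≤ α i := by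
  intro p hp
  induction hp using Submodule.span_induction with
  | mem x hx =>
    obtain ⟨i, rfl⟩ := hx
    intro α hα
    rw [support_X_pow, Finset.mem_singleton] at hα
    subst hα
    exact ⟨i, by simp⟩
  | zero => intro α hα; simp at hα
  | add x y hx hy ihx ihy =>
    intro α hα
    rcases Finset.mem_union.1 (MvPolynomial.support_add hα) with h | h
    · exact ihx α h
    · exact ihy α h
  | smul a x hx ihx =>
    intro α hα
    rw [smul_eq_mul] at hα
    obtain ⟨β, hβ, γ, hγ, rfl⟩ := Finset.mem_add.1 (MvPolynomial.support_mul _ _ hα)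
    obtain ⟨i, hi⟩ := ihx γ hγ
    exact ⟨i, by rw [Finsupp.add_apply]; omega⟩

lemma prod_X_mem_pow (I : Finset (Fin m)) :
    (∏ i ∈ I, (X i : MvPolynomial (Fin m) (ZMod 2))) ∈ (Msp m) ^ I.card := by
  induction I using Finset.induction_on with
  | empty => simp [Ideal.one_eq_top]
  | @insert a s ha ih =>
    rw [Finset.prod_insert ha, Finset.card_insert_of_notMem ha, pow_succ']
    exact Ideal.mul_mem_mul (Ideal.subset_span ⟨a, rfl⟩) ih

lemma monomial_prodX (t : Finset (Fin m)) :
    (∏ i ∈ t, (X i : MvPolynomial (Fin m) (ZMod 2))) = monomial (sfm t) 1 := by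
  induction t using Finset.induction_on with
  | empty =>
    rw [Finset.prod_empty, sfm, Finset.sum_empty]
    simp
  | @insert a s ha ih =>
    rw [Finset.prod_insert ha, ih, show (X a : MvPolynomial (Fin m) (ZMod 2))
      = monomial (Finsupp.single a 1) 1 from by rw [← X_pow_eq_monomial, pow_one],
      monomial_mul, sfm, sfm, Finset.sum_insert ha, one_mul]

lemma coeff_prodX1 (K J : Finset (Fin m)) :
    coeff (sfm J) (∏ i ∈ K, ((X i : MvPolynomial (Fin m) (ZMod 2)) + 1))
      = if J ⊆ K then 1 else 0 := by
  rw [Finset.prod_add]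
  simp only [Finset.prod_const_one, mul_one, monomial_prodX]
  rw [coeff_sum]
  simp only [coeff_monomial]
  have : ∀ t ∈ K.powerset, (if sfm t = sfm J then (1 : ZMod 2) else 0)
      = if t = J then 1 else 0 := by
    intro t _
    congr 1
    simp [sfm_inj.eq_iff]
  rw [Finset.sum_congr rfl this, Finset.sum_ite_eq' K.powerset J (fun _ => (1 : ZMod 2))]
  simp [Finset.mem_powerset]

lemma two_eq_zero' : (2 : MvPolynomial (Fin m) (ZMod 2)) = 0 := by
  have h : (2 : MvPolynomial (Fin m) (ZMod 2)) = C 1 + C 1 := by rw [C_1]; ring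
  rw [h, ← map_add, show ((1 : ZMod 2) + 1) = 0 from rfl, C_0]

lemma sq1 (i : Fin m) :
    ((X i : MvPolynomial (Fin m) (ZMod 2)) + 1) ^ 2 = X i ^ 2 + 1 := by
  have h2 := two_eq_zero' (m := m)
  linear_combination (X i : MvPolynomial (Fin m) (ZMod 2)) * h2

lemma dec2 (i : Fin m) (e : ℕ) :
    ((X i : MvPolynomial (Fin m) (ZMod 2)) + 1) ^ e
      = ((X i) + 1) ^ (e % 2) * ((X i) ^ 2 + 1) ^ (e / 2) := by
  rw [← sq1, ← pow_mul, ← pow_add, Nat.mod_add_div]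

def EvenSupp (p : MvPolynomial (Fin m) (ZMod 2)) : Prop :=
  ∀ β ∈ p.support, ∀ i, β i % 2 = 0

lemma evenSupp_mul {p q : MvPolynomial (Fin m) (ZMod 2)} (hp : EvenSupp p) (hq : EvenSupp q) :
    EvenSupp (p * q) := by
  intro β hβ i
  obtain ⟨γ, hγ, δ, hδ, rfl⟩ := Finset.mem_add.1 (MvPolynomial.support_mul _ _ hβ)
  have h1 := hp γ hγ i
  have h2 := hq δ hδ i
  rw [Finsupp.add_apply]
  omega

lemma evenSupp_one : EvenSupp (1 : MvPolynomial (Fin m) (ZMod 2)) := by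
  intro β hβ i
  rw [mem_support_iff, MvPolynomial.coeff_one] at hβ
  split_ifs at hβ with h
  · rw [← h]; simp
  · exact absurd rfl hβ

lemma evenSupp_pow {p : MvPolynomial (Fin m) (ZMod 2)} (hp : EvenSupp p) (n : ℕ) :
    EvenSupp (p ^ n) := by
  induction n with
  | zero => rw [pow_zero]; exact evenSupp_one
  | succ k ih => rw [pow_succ]; exact evenSupp_mul ih hp

lemma evenSupp_X2 (i : Fin m) : EvenSupp ((X i : MvPolynomial (Fin m) (ZMod 2)) ^ 2 + 1) := by
  intro β hβ j
  rcases Finset.mem_union.1 (MvPolynomial.support_add hβ) with h | h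
  · rw [support_X_pow, Finset.mem_singleton] at h
    subst h
    rw [Finsupp.single_apply]
    split <;> omega
  · exact evenSupp_one β h j

lemma evenSupp_H (α : Fin m →₀ ℕ) :
    EvenSupp (∏ i ∈ α.support, ((X i : MvPolynomial (Fin m) (ZMod 2)) ^ 2 + 1) ^ (α i / 2)) := by
  apply Finset.prod_induction _ EvenSupp (fun a b => evenSupp_mul) evenSupp_one
  intro i _
  exact evenSupp_pow (evenSupp_X2 i) _

lemma dec3 (α : Fin m →₀ ℕ) :
    (α.prod fun i e => ((X i : MvPolynomial (Fin m) (ZMod 2)) + 1) ^ e)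
      = (∏ i ∈ Oodd α, ((X i) + 1))
        * ∏ i ∈ α.support, ((X i) ^ 2 + 1) ^ (α i / 2) := by
  rw [Finsupp.prod]
  have : ∀ i ∈ α.support, ((X i : MvPolynomial (Fin m) (ZMod 2)) + 1) ^ (α i)
      = ((X i) + 1) ^ (α i % 2) * ((X i) ^ 2 + 1) ^ (α i / 2) := fun i _ => dec2 i (α i)
  rw [Finset.prod_congr rfl this, Finset.prod_mul_distrib]
  congr 1
  rw [Oodd, Finset.prod_filter]
  apply Finset.prod_congr rfl
  intro i _
  rcases Nat.mod_two_eq_zero_or_one (α i) with h | h <;> rw [h] <;> simp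

noncomputable def phim (m : ℕ) :
    MvPolynomial (Fin m) (ZMod 2) →ₐ[ZMod 2] MvPolynomial (Fin m) (ZMod 2) :=
  aeval (fun i => X i + 1)

lemma coeff_phi_monomial (α : Fin m →₀ ℕ) (cc : ZMod 2) (J : Finset (Fin m)) :
    coeff (sfm J) (phim m (monomial α cc)) = if J ⊆ Oodd α then cc else 0 := by
  unfold phim
  rw [aeval_monomial, algebraMap_eq, coeff_C_mul, dec3]
  set H := ∏ i ∈ α.support, ((X i : MvPolynomial (Fin m) (ZMod 2)) ^ 2 + 1) ^ (α i / 2) with hH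
  have hcoeffH : coeff 0 H = 1 := by
    rw [show (coeff 0 H) = constantCoeff H from (congrFun constantCoeff_eq H).symm, hH]
    simp [map_prod, map_pow, map_add, constantCoeff_X]
  have heven : EvenSupp H := by rw [hH]; exact evenSupp_H α
  rw [coeff_mul]
  have hmain : ∑ x ∈ Finset.HasAntidiagonal.antidiagonal (sfm J),
      coeff x.1 (∏ i ∈ Oodd α, ((X i : MvPolynomial (Fin m) (ZMod 2)) + 1)) * coeff x.2 H
      = coeff (sfm J) (∏ i ∈ Oodd α, ((X i : MvPolynomial (Fin m) (ZMod 2)) + 1))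
        * coeff 0 H := by
    apply Finset.sum_eq_single ((sfm J, 0) : (Fin m →₀ ℕ) × (Fin m →₀ ℕ))
    · rintro ⟨β, γ⟩ hmem hne
      rw [Finset.HasAntidiagonal.mem_antidiagonal] at hmem
      have hmem' : β + γ = sfm J := hmem
      by_cases hγ : γ ∈ H.support
      · exfalso
        have hγ0 : γ = 0 := by
          ext i
          have h1 := heven γ hγ i
          have h2 : β i + γ i = sfm J i := by rw [← Finsupp.add_apply, hmem']
          have h3 := sfm_le_one J i
          simp only [Finsupp.coe_zero, Pi.zero_apply]
          omega
        subst hγ0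
        rw [add_zero] at hmem'
        subst hmem'
        exact hne rfl
      · rw [MvPolynomial.notMem_support_iff.1 hγ, mul_zero]
    · intro h
      exact absurd (Finset.HasAntidiagonal.mem_antidiagonal.2 (add_zero _)) h
  rw [hmain, hcoeffH, mul_one, coeff_prodX1]
  split_ifs <;> simp

lemma coeff_phi (p : MvPolynomial (Fin m) (ZMod 2)) (J : Finset (Fin m)) :
    coeff (sfm J) (phim m p)
      = ∑ α ∈ p.support, (if J ⊆ Oodd α then coeff α p else 0) := by
  conv_lhs => rw [p.as_sum]
  rw [map_sum, coeff_sum]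
  exact Finset.sum_congr rfl fun α _ => coeff_phi_monomial α (coeff α p) J

lemma count_between (S T : Finset (Fin m)) (c : ZMod 2) :
    ∑ J ∈ Finset.univ.powerset.filter (fun J => S ⊆ J), (if J ⊆ T then c else 0)
      = if T = S then c else 0 := by
  rw [Finset.sum_ite, Finset.sum_const_zero, add_zero, Finset.sum_const, Finset.filter_filter]
  have hIcc : Finset.univ.powerset.filter (fun J => S ⊆ J ∧ J ⊆ T) = Finset.Icc S T := by
    ext K
    simp [Finset.mem_Icc, Finset.mem_powerset, Finset.subset_univ, Finset.le_iff_subset]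
  rw [hIcc]
  by_cases hST : S ⊆ T
  · rw [Finset.card_Icc_finset hST]
    by_cases hk : T.card - S.card = 0
    · have hTS : T = S := (Finset.eq_of_subset_of_card_le hST (by omega)).symm
      rw [if_pos hTS, hk, pow_zero, one_smul]
    · have hTS : T ≠ S := by
        intro h; subst h; omega
      rw [if_neg hTS]
      have : ((2 : ℕ) ^ (T.card - S.card)) • c = ((2 : ℕ) ^ (T.card - S.card) : ℕ) • c := by
        norm_num
      rw [nsmul_eq_mul]
      have h2 : (((2 : ℕ) ^ (T.card - S.card) : ℕ) : ZMod 2) = 0 := by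
        rw [Nat.cast_pow]
        have : ((2 : ℕ) : ZMod 2) = 0 := rfl
        rw [this, zero_pow hk]
      rw [h2, zero_mul]
  · rw [Finset.Icc_eq_empty (by simpa [Finset.le_iff_subset] using hST), Finset.card_empty,
      zero_smul]
    have hTS : T ≠ S := by
      intro h; subst h; exact hST (Finset.Subset.refl _)
    rw [if_neg hTS]

lemma Dtr_phi (p : MvPolynomial (Fin m) (ZMod 2)) (S : Finset (Fin m)) :
    Dtr Finset.univ (fun J => coeff (sfm J) (phim m p)) S
      = ∑ α ∈ p.support, (if Oodd α = S then coeff α p else 0) := by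
  rw [Dtr]
  have : ∀ J ∈ Finset.univ.powerset.filter (fun J => S ⊆ J),
      coeff (sfm J) (phim m p) = ∑ α ∈ p.support, (if J ⊆ Oodd α then coeff α p else 0) :=
    fun J _ => coeff_phi p J
  rw [Finset.sum_congr rfl this, Finset.sum_comm]
  apply Finset.sum_congr rfl
  intro α _
  exact count_between S (Oodd α) (coeff α p)

end PolyPart
lemma phim_Xsub1 {m : ℕ} (i : Fin m) :
    phim m ((X i : MvPolynomial (Fin m) (ZMod 2)) - 1) = X i := by
  unfold phim
  rw [map_sub, aeval_X, map_one]
  ring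

lemma phim_gI {m : ℕ} (I : Finset (Fin m)) :
    phim m (gI m I) = ∏ i ∈ I, (X i : MvPolynomial (Fin m) (ZMod 2)) := by
  unfold gI
  rw [map_prod]
  exact Finset.prod_congr rfl fun i _ => phim_Xsub1 i

lemma phim_sq {m : ℕ} (i : Fin m) :
    phim m ((X i : MvPolynomial (Fin m) (ZMod 2)) ^ 2 - 1) = X i ^ 2 := by
  unfold phim
  rw [map_sub, map_pow, aeval_X, map_one, sq1]
  ring

/-- if v = c + e with c ∈ Mˡ and e = x_{I₁} + ⋯ + x_{I_k}, the I_τ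
pairwise distinct, k ≤ t, and some |I_τ| ≥ l, then the remainder of v mod G has
weight strictly greater than t. -/
theorem stmt17 (m l t : ℕ) (hl1 : 1 ≤ l) (hlm : l ≤ m)
    (ht : 2 * t + 1 ≤ 2 ^ l ∧ ∀ s : ℕ, 2 * s + 1 ≤ 2 ^ l → s ≤ t)
    (c e v : MvPolynomial (Fin m) (ZMod 2))
    (hc : ∀ α ∈ c.support, ∀ i : Fin m, α i ≤ 1)
    (hcM : Ideal.Quotient.mk (relIdeal m) c ∈ Mideal m ^ l)
    (T : Finset (Finset (Fin m))) (he : e = ∑ I ∈ T, XI m I)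
    (hk : T.card ≤ t) (hbig : ∃ I ∈ T, l ≤ I.card)
    (hv : v = c + e)
    (r : MvPolynomial (Fin m) (ZMod 2)) (hr : IsRemainder m l v r) :
    t < r.support.card := by
  by_contra hcon
  push_neg at hcon
  -- decompose c
  have hMid : Mideal m = Ideal.map (Ideal.Quotient.mk (relIdeal m))
      (Ideal.span {p : MvPolynomial (Fin m) (ZMod 2) | ∃ i : Fin m, p = X i - 1}) := by
    rw [Ideal.map_span, Mideal]
    congr 1
    ext q
    constructor
    · rintro ⟨i, rfl⟩; exact ⟨X i - 1, ⟨i, rfl⟩, rfl⟩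
    · rintro ⟨p, ⟨i, rfl⟩, rfl⟩; exact ⟨i, rfl⟩
  have hcMl : c ∈ Ideal.span {p : MvPolynomial (Fin m) (ZMod 2) | ∃ i : Fin m, p = X i - 1} ^ l
      ⊔ relIdeal m := by
    have h1 : Ideal.Quotient.mk (relIdeal m) c ∈ Ideal.map (Ideal.Quotient.mk (relIdeal m))
        (Ideal.span {p : MvPolynomial (Fin m) (ZMod 2) | ∃ i : Fin m, p = X i - 1} ^ l) := by
      rw [Ideal.map_pow, ← hMid]; exact hcM
    have h2 := Ideal.mem_comap.2 h1
    rwa [Ideal.comap_map_of_surjective _ Ideal.Quotient.mk_surjective,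
      ← RingHom.ker_eq_comap_bot, Ideal.mk_ker] at h2
  obtain ⟨c₁, hc₁, c₂, hc₂, hc12⟩ := Submodule.mem_sup.1 hcMl
  have her : e - r = (v - r) - c₁ - c₂ := by rw [hv, ← hc12]; ring
  -- membership of the phi-images
  have hphi_vr : phim m (v - r) ∈ Msp m ^ l := by
    have h1 : phim m (v - r) ∈ Ideal.map (phim m).toRingHom (Ideal.span (Gset m l)) :=
      Ideal.mem_map_of_mem _ hr.1
    rw [Ideal.map_span] at h1
    refine Ideal.span_le.2 ?_ h1
    rintro q ⟨p, ⟨I, hIcard, rfl⟩, rfl⟩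
    have h2 : (phim m).toRingHom (gI m I) = ∏ i ∈ I, (X i : MvPolynomial (Fin m) (ZMod 2)) :=
      phim_gI I
    rw [h2]
    have := prod_X_mem_pow I
    rwa [hIcard] at this
  have hphi_c1 : phim m c₁ ∈ Msp m ^ l := by
    have h1 : Ideal.map (phim m).toRingHom
        (Ideal.span {p : MvPolynomial (Fin m) (ZMod 2) | ∃ i : Fin m, p = X i - 1})
        ≤ Msp m := by
      rw [Ideal.map_span, Ideal.span_le]
      rintro q ⟨p, ⟨i, rfl⟩, rfl⟩
      have h2 : (phim m).toRingHom (X i - 1) = (X i : MvPolynomial (Fin m) (ZMod 2)) :=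
        phim_Xsub1 i
      rw [h2]
      exact Ideal.subset_span ⟨i, rfl⟩
    have h2 : phim m c₁ ∈ Ideal.map (phim m).toRingHom
        (Ideal.span {p : MvPolynomial (Fin m) (ZMod 2) | ∃ i : Fin m, p = X i - 1} ^ l) :=
      Ideal.mem_map_of_mem _ hc₁
    rw [Ideal.map_pow] at h2
    exact Ideal.pow_right_mono h1 l h2
  have hphi_c2 : phim m c₂ ∈ Sqsp m := by
    have h1 : phim m c₂ ∈ Ideal.map (phim m).toRingHom (relIdeal m) :=
      Ideal.mem_map_of_mem _ hc₂
    rw [relIdeal, Ideal.map_span] at h1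
    refine Ideal.span_le.2 ?_ h1
    rintro q ⟨p, ⟨i, rfl⟩, rfl⟩
    have h2 : (phim m).toRingHom (X i ^ 2 - 1) = (X i : MvPolynomial (Fin m) (ZMod 2)) ^ 2 :=
      phim_sq i
    rw [h2]
    exact Ideal.subset_span ⟨i, rfl⟩
  have hu_mem : phim m (e - r) ∈ (Msp m ^ l) ⊔ Sqsp m := by
    rw [her, map_sub, map_sub]
    exact Submodule.sub_mem _
      (Submodule.sub_mem _ (Submodule.mem_sup_left hphi_vr) (Submodule.mem_sup_left hphi_c1))
      (Submodule.mem_sup_right hphi_c2)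
  obtain ⟨u₁, hu₁, u₂, hu₂, huu⟩ := Submodule.mem_sup.1 hu_mem
  have hvanG : ∀ J : Finset (Fin m), J.card < l → coeff (sfm J) (phim m (e - r)) = 0 := by
    intro J hJ
    rw [← huu, coeff_add]
    have h1 : coeff (sfm J) u₁ = 0 := by
      by_contra h
      have := mem_Msp_pow_deg l u₁ hu₁ (sfm J) (mem_support_iff.2 h)
      rw [degn_sfm] at this
      omega
    have h2 : coeff (sfm J) u₂ = 0 := by
      by_contra h
      obtain ⟨i, hi⟩ := mem_Sqsp_even u₂ hu₂ (sfm J) (mem_support_iff.2 h)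
      have := sfm_le_one J i
      omega
    rw [h1, h2, add_zero]
  -- structure of e
  have he' : e = ∑ I ∈ T, monomial (sfm I) (1 : ZMod 2) := by
    rw [he]
    refine Finset.sum_congr rfl fun I _ => ?_
    rw [show XI m I = ∏ i ∈ I, (X i : MvPolynomial (Fin m) (ZMod 2)) from rfl, monomial_prodX]
  have hsupp_e : e.support ⊆ T.image sfm := by
    intro b hb
    rw [mem_support_iff] at hb
    by_contra hbim
    apply hb
    rw [he', coeff_sum]
    apply Finset.sum_eq_zero
    intro I hI
    rw [coeff_monomial, if_neg]
    intro hIb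
    exact hbim (Finset.mem_image.2 ⟨I, hI, hIb⟩)
  have hcoeff_r_low : ∀ b ∈ r.support, b.support.card < l := by
    intro b hb
    by_contra h
    push_neg at h
    obtain ⟨I, hIsub, hIcard⟩ := Finset.exists_subset_card_eq h
    exact hr.2 b hb I hIcard hIsub
  obtain ⟨I₀, hI₀T, hI₀l⟩ := hbig
  have hcoeff_e_I0 : coeff (sfm I₀) e = 1 := by
    rw [he', coeff_sum]
    simp only [coeff_monomial]
    have hcongr : ∀ I ∈ T, (if sfm I = sfm I₀ then (1 : ZMod 2) else 0)
        = if I = I₀ then 1 else 0 := by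
      intro I _
      congr 1
      simp [sfm_inj.eq_iff]
    rw [Finset.sum_congr rfl hcongr,
      Finset.sum_ite_eq' T I₀ (fun _ => (1 : ZMod 2)), if_pos hI₀T]
  have hcoeff_r_I0 : coeff (sfm I₀) r = 0 := by
    by_contra h
    have hmem := mem_support_iff.2 h
    have := hcoeff_r_low (sfm I₀) hmem
    rw [sfm_support] at this
    omega
  have hval : coeff (sfm I₀) (e - r) = 1 := by
    rw [coeff_sub, hcoeff_e_I0, hcoeff_r_I0, sub_zero]
  have hmemI0 : sfm I₀ ∈ (e - r).support :=
    mem_support_iff.2 (by rw [hval]; exact one_ne_zero)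
  -- the transform of e - r at I₀ is 1
  have hDI0 : Dtr Finset.univ (fun J => coeff (sfm J) (phim m (e - r))) I₀ = 1 := by
    rw [Dtr_phi (e - r) I₀]
    have hsum : (∑ α ∈ (e - r).support,
        if Oodd α = I₀ then coeff α (e - r) else 0)
        = if Oodd (sfm I₀) = I₀ then coeff (sfm I₀) (e - r) else 0 := by
      apply Finset.sum_eq_single (sfm I₀)
      · intro b hb hbne
        by_cases hO : Oodd b = I₀
        · exfalso
          rcases Finset.mem_union.1 (MvPolynomial.support_sub _ e r hb) with hbe | hbr
          · obtain ⟨I, hIT, hIb⟩ := Finset.mem_image.1 (hsupp_e hbe)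
            subst hIb
            rw [O_sfm] at hO
            subst hO
            exact hbne rfl
          · have h1 := hcoeff_r_low b hbr
            have h2 : (Oodd b).card ≤ b.support.card := Finset.card_le_card (O_subset b)
            rw [hO] at h2
            omega
        · exact if_neg hO
      · intro h
        exact absurd hmemI0 h
    rw [hsum, if_pos (O_sfm I₀), hval]
  -- apply the Reed-Muller minimum weight bound
  have hGne : ∃ J ∈ (Finset.univ : Finset (Fin m)).powerset,
      (fun J => coeff (sfm J) (phim m (e - r))) J ≠ 0 := by
    by_contra hall
    push_neg at hall
    have hzero : Dtr Finset.univ (fun J => coeff (sfm J) (phim m (e - r))) I₀ = 0 := by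
      rw [Dtr]
      apply Finset.sum_eq_zero
      intro J hJ
      exact hall J (Finset.mem_filter.1 hJ).1
    rw [hDI0] at hzero
    exact one_ne_zero hzero
  have hRM := RMlem Finset.univ l (fun J => coeff (sfm J) (phim m (e - r)))
    (fun J _ hJ => hvanG J hJ) hGne
  -- upper bound on the weight
  have hWsub : (Finset.univ.powerset.filter
      (fun S => Dtr Finset.univ (fun J => coeff (sfm J) (phim m (e - r))) S ≠ 0))
      ⊆ (e - r).support.image Oodd := by
    intro S hS
    have hne := (Finset.mem_filter.1 hS).2
    rw [Dtr_phi (e - r) S] at hne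
    obtain ⟨α, hα, hval'⟩ := Finset.exists_ne_zero_of_sum_ne_zero hne
    have hOα : Oodd α = S := by
      by_contra h
      exact hval' (if_neg h)
    exact Finset.mem_image.2 ⟨α, hα, hOα⟩
  have hle : 2 ^ l ≤ t + t := by
    calc 2 ^ l ≤ (Finset.univ.powerset.filter
        (fun S => Dtr Finset.univ (fun J => coeff (sfm J) (phim m (e - r))) S ≠ 0)).card := hRM
    _ ≤ ((e - r).support.image Oodd).card := Finset.card_le_card hWsub
    _ ≤ (e - r).support.card := Finset.card_image_le
    _ ≤ (e.support ∪ r.support).card := Finset.card_le_card (MvPolynomial.support_sub _ e r)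
    _ ≤ e.support.card + r.support.card := Finset.card_union_le _ _
    _ ≤ T.card + r.support.card := by
        have := Finset.card_le_card hsupp_e
        have h2 := Finset.card_image_le (s := T) (f := sfm)
        omega
    _ ≤ t + t := Nat.add_le_add hk hcon
  have h1 := ht.1
  omega
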